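/- Let X₀, X₁ be r.i. spaces on [0,1] with X₀ strictly embedded in X₁ (i.e., any bounded sequence in X₀ whose supports have measures tending to 0 tends to 0 in X₁ norm), and φ_{X₀}(1) = φ_{X₁}(1) = 1. Then lim_{t→0⁺} φ_{X₁}(t)/φ_{X₀}(t) = 0. -/

import Mathlib

open MeasureTheory Set Filter Topology

noncomputable section

/-- A Banach function lattice on a subset `I ⊆ ℝ` (with Lebesgue measure), encoded by
a membership predicate `Mem` and a (total) norm function `N` satisfying the lattice/ideal
axioms on members. -/
structure BFL (I : Set ℝ) where
  Mem : (ℝ → ℝ) → Prop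
  N : (ℝ → ℝ) → ℝ
  mem_meas : ∀ f, Mem f → AEMeasurable f (volume.restrict I)
  nonneg : ∀ f, 0 ≤ N f
  zero_mem : Mem 0
  zero_norm : N 0 = 0
  ideal : ∀ f g, AEMeasurable f (volume.restrict I) →
    (∀ᵐ t ∂volume.restrict I, |f t| ≤ |g t|) → Mem g → Mem f ∧ N f ≤ N g
  add_mem : ∀ f g, Mem f → Mem g → Mem (f + g)
  add_le : ∀ f g, Mem f → Mem g → N (f + g) ≤ N f + N g
  smul_mem : ∀ (c : ℝ) f, Mem f → Mem (c • f)
  smul_norm : ∀ (c : ℝ) f, Mem f → N (c • f) = |c| * N f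

/-- A rearrangement invariant (symmetric) space on `I`: a Banach function lattice whose
norm depends only on the distribution function, having the Fatou property (the paper's
standing assumption that r.i. spaces are separable or maximal). -/
structure RIS (I : Set ℝ) extends BFL I where
  symm : ∀ f g, AEMeasurable f (volume.restrict I) → Mem g →
    (∀ τ : ℝ, 0 < τ →
      (volume.restrict I) {t | τ < |f t|} = (volume.restrict I) {t | τ < |g t|}) →
    Mem f ∧ N f = N g
  fatou : ∀ (f : ℕ → ℝ → ℝ) (g : ℝ → ℝ) (C : ℝ), (∀ n, Mem (f n)) →
    (∀ n, ∀ᵐ t ∂volume.restrict I, 0 ≤ f n t ∧ f n t ≤ f (n + 1) t) →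
    (∀ᵐ t ∂volume.restrict I, Tendsto (fun n => f n t) atTop (𝓝 (g t))) →
    AEMeasurable g (volume.restrict I) → (∀ n, N (f n) ≤ C) →
    Mem g ∧ N g ≤ C

/-- The fundamental function `φ_X(t) = ‖χ_{[0,t]}‖_X` of an r.i. space on `[0,1]`. -/
def fund (X : RIS (Set.Icc (0:ℝ) 1)) (t : ℝ) : ℝ :=
  X.N ((Set.Icc (0:ℝ) t).indicator fun _ => (1:ℝ))

/-- `X₀` is strictly embedded into `X₁`: every norm-bounded sequence in `X₀` whose supports
have measure tending to `0` tends to `0` in the `X₁` norm. -/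
def StrictEmb (X0 X1 : RIS (Set.Icc (0:ℝ) 1)) : Prop :=
  ∀ (x : ℕ → ℝ → ℝ) (C : ℝ), (∀ n, X0.Mem (x n)) → (∀ n, X0.N (x n) ≤ C) →
    Tendsto (fun n => volume (Function.support (x n) ∩ Set.Icc 0 1)) atTop (𝓝 0) →
    Tendsto (fun n => X1.N (x n)) atTop (𝓝 0)

/-- If `X₀` is strictly embedded in `X₁` (r.i. spaces on `[0,1]`, with
`‖·‖_{X₁} ≤ ‖·‖_{X₀}`) and `φ_{X₀}(1) = φ_{X₁}(1) = 1`, then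
`lim_{t→0⁺} φ_{X₁}(t)/φ_{X₀}(t) = 0`. -/
theorem stmt3 (X0 X1 : RIS (Set.Icc (0:ℝ) 1))
    (hemb : ∀ f, X0.Mem f → X1.Mem f ∧ X1.N f ≤ X0.N f)
    (hstrict : StrictEmb X0 X1)
    (hconst : X0.Mem ((Set.Icc (0:ℝ) 1).indicator fun _ => (1:ℝ)))
    (h0 : fund X0 1 = 1) (h1 : fund X1 1 = 1) :
    Tendsto (fun t => fund X1 t / fund X0 t) (𝓝[>] (0:ℝ)) (𝓝 0) := by
  rw [tendsto_iff_seq_tendsto]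
  intro t ht
  have ht0 : Tendsto t atTop (𝓝 (0:ℝ)) := ht.mono_right nhdsWithin_le_nhds
  have hmeas : ∀ s : ℝ, AEMeasurable ((Icc (0:ℝ) s).indicator fun _ => (1:ℝ))
      (volume.restrict (Icc (0:ℝ) 1)) :=
    fun s => (measurable_const.indicator measurableSet_Icc).aemeasurable
  have hmem : ∀ s : ℝ, X0.Mem ((Icc (0:ℝ) s).indicator fun _ => (1:ℝ)) ∧
      fund X0 s ≤ 1 := by
    intro s
    have hle : ∀ᵐ τ ∂volume.restrict (Icc (0:ℝ) 1),
        |((Icc (0:ℝ) s).indicator fun _ => (1:ℝ)) τ| ≤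
          |((Icc (0:ℝ) 1).indicator fun _ => (1:ℝ)) τ| := by
      filter_upwards [ae_restrict_mem measurableSet_Icc] with τ hτ
      by_cases h : τ ∈ Icc (0:ℝ) s <;> simp [Set.indicator_apply, h, hτ]
    have := X0.ideal _ _ (hmeas s) hle hconst
    exact ⟨this.1, le_trans this.2 (le_of_eq h0)⟩
  set x : ℕ → ℝ → ℝ := fun n =>
    if fund X0 (t n) = 0 then 0
    else (fund X0 (t n))⁻¹ • ((Icc (0:ℝ) (t n)).indicator fun _ => (1:ℝ)) with hx
  have hmemx : ∀ n, X0.Mem (x n) := by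
    intro n
    by_cases h : fund X0 (t n) = 0 <;> simp only [hx, h, if_true, if_false, if_pos, if_neg]
    · simpa using X0.zero_mem
    · simpa [h] using X0.smul_mem (fund X0 (t n))⁻¹ _ (hmem (t n)).1
  have hnormx : ∀ n, X0.N (x n) ≤ 1 := by
    intro n
    by_cases h : fund X0 (t n) = 0
    · simp [hx, h, X0.zero_norm]
    · have hpos : 0 < fund X0 (t n) := lt_of_le_of_ne (X0.nonneg _) (Ne.symm h)
      have := X0.smul_norm (fund X0 (t n))⁻¹ _ (hmem (t n)).1
      simp only [hx, if_neg h]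
      rw [this, abs_of_pos (inv_pos.mpr hpos)]
      have : (fund X0 (t n))⁻¹ * X0.N ((Icc (0:ℝ) (t n)).indicator fun _ => (1:ℝ))
          = (fund X0 (t n))⁻¹ * fund X0 (t n) := rfl
      rw [this, inv_mul_cancel₀ h]
  have hsupp : Tendsto (fun n => volume (Function.support (x n) ∩ Set.Icc 0 1)) atTop (𝓝 0) := by
    have hub : ∀ n, volume (Function.support (x n) ∩ Set.Icc 0 1) ≤ ENNReal.ofReal (t n) := by
      intro n
      have hsub : Function.support (x n) ⊆ Icc (0:ℝ) (t n) := by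
        by_cases h : fund X0 (t n) = 0
        · simp [hx, h, Function.support_zero]
        · simp only [hx, if_neg h]
          refine (Function.support_const_smul_subset _ _).trans ?_
          exact Set.support_indicator_subset
      calc volume (Function.support (x n) ∩ Set.Icc 0 1)
          ≤ volume (Icc (0:ℝ) (t n)) := measure_mono (Set.inter_subset_left.trans hsub)
        _ = ENNReal.ofReal (t n) := by rw [Real.volume_Icc]; ring_nf
    have hub0 : Tendsto (fun n => ENNReal.ofReal (t n)) atTop (𝓝 0) := by
      have := (ENNReal.continuous_ofReal.tendsto 0).comp ht0
      simpa [Function.comp_def] using this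
    exact tendsto_of_tendsto_of_tendsto_of_le_of_le tendsto_const_nhds hub0
      (fun n => zero_le) hub
  have hlim := hstrict x 1 hmemx hnormx hsupp
  refine hlim.congr fun n => ?_
  by_cases h : fund X0 (t n) = 0
  · simp [Function.comp, hx, h, X1.zero_norm, div_eq_mul_inv]
  · have hpos : 0 < fund X0 (t n) := lt_of_le_of_ne (X0.nonneg _) (Ne.symm h)
    have hm1 : X1.Mem ((Icc (0:ℝ) (t n)).indicator fun _ => (1:ℝ)) :=
      (hemb _ (hmem (t n)).1).1
    have := X1.smul_norm (fund X0 (t n))⁻¹ _ hm1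
    simp only [hx, if_neg h, Function.comp]
    rw [this, abs_of_pos (inv_pos.mpr hpos)]
    show (fund X0 (t n))⁻¹ * fund X1 (t n) = fund X1 (t n) / fund X0 (t n)
    rw [div_eq_inv_mul]
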